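/- Let A₁₁, A₁₂, A₂₂ be Riccati data on a complex separable Hilbert space H with diag{A₁₁} − A₂₂ ≫ 0 and A₂₂ ≥ 0 (so that A₁₁ ≫ 0), and let q₀ = A₁₁^{1/2} be the strongly positive square root of A₁₁. Set U = q₀⁻¹ ∘ A₁₂ ∘ diag{q₀}⁻¹ : ℓ²(H) → H and D = diag{q₀}⁻¹ A₂₂ diag{q₀}⁻¹, and define G(t) = I + U(diag{t} − D)⁻¹U* for selfadjoint t ∈ B(H) with diag{t} − D ≫ 0. Then a selfadjoint operator s with diag{s} − A₂₂ ≫ 0 satisfies the fixed point equation s = A₁₁ + A₁₂(diag{s} − A₂₂)⁻¹A₁₂* if and only if t = q₀⁻¹ s q₀⁻¹ satisfies diag{t} − D ≫ 0 and t = G(t). -/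

import Mathlib

open MeasureTheory ContinuousLinearMap Filter
open scoped ENNReal NNReal Topology

noncomputable section

/-- `ℓ²(H)`: the Hilbert space of square-summable sequences in `H`, indexed by `ℕ`
(index `k : ℕ` corresponds to the `(k+1)`-st entry in the paper's `1`-based indexing). -/
abbrev l2 (H : Type*) [NormedAddCommGroup H] [InnerProductSpace ℂ H] : Type _ :=
  lp (fun _ : ℕ => H) 2

variable {H : Type*} [NormedAddCommGroup H] [InnerProductSpace ℂ H]

lemma memℓp_diag (q : H →L[ℂ] H) (ξ : l2 H) : Memℓp (fun k => q (ξ k)) 2 := by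
  have h2 : (0:ℝ) < (2 : ℝ≥0∞).toReal := by norm_num
  apply memℓp_gen
  have hs : Summable (fun k => ‖q‖ ^ (2 : ℝ≥0∞).toReal * ‖ξ k‖ ^ (2 : ℝ≥0∞).toReal) :=
    ((lp.memℓp ξ).summable h2).mul_left _
  refine Summable.of_nonneg_of_le (fun k => ?_) (fun k => ?_) hs
  · positivity
  · rw [← Real.mul_rpow (norm_nonneg _) (norm_nonneg _)]
    exact Real.rpow_le_rpow (norm_nonneg _) (q.le_opNorm _) (by norm_num)

/-- `diag{q}`: the bounded block-diagonal operator on `ℓ²(H)` acting componentwise,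
`(diag{q} ξ)ₖ = q (ξₖ)`. -/
def diagOp (q : H →L[ℂ] H) : l2 H →L[ℂ] l2 H :=
  LinearMap.mkContinuous
    { toFun := fun ξ => ⟨fun k => q (ξ k), memℓp_diag q ξ⟩
      map_add' := fun ξ η => by ext k; simp [lp.coeFn_add] <;> rfl
      map_smul' := fun c ξ => by ext k; simp [lp.coeFn_smul] }
    ‖q‖
    (by
      intro ξ
      have h2 : (0:ℝ) < (2 : ℝ≥0∞).toReal := by norm_num
      refine lp.norm_le_of_tsum_le h2 (by positivity) ?_
      have hξ : ‖ξ‖ ^ (2 : ℝ≥0∞).toReal = ∑' k, ‖ξ k‖ ^ (2 : ℝ≥0∞).toReal :=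
        lp.norm_rpow_eq_tsum h2 ξ
      have hsum : Summable (fun k => ‖ξ k‖ ^ (2 : ℝ≥0∞).toReal) := (lp.memℓp ξ).summable h2
      calc ∑' k, ‖(fun k => q (ξ k)) k‖ ^ (2 : ℝ≥0∞).toReal
          ≤ ∑' k, ‖q‖ ^ (2 : ℝ≥0∞).toReal * ‖ξ k‖ ^ (2 : ℝ≥0∞).toReal := by
            refine Summable.tsum_le_tsum (fun k => ?_) ?_ (hsum.mul_left _)
            · rw [← Real.mul_rpow (norm_nonneg _) (norm_nonneg _)]
              exact Real.rpow_le_rpow (norm_nonneg _) (q.le_opNorm _) (by norm_num)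
            · refine Summable.of_nonneg_of_le (fun k => ?_) (fun k => ?_)
                (hsum.mul_left (‖q‖ ^ (2 : ℝ≥0∞).toReal))
              · positivity
              · rw [← Real.mul_rpow (norm_nonneg _) (norm_nonneg _)]
                exact Real.rpow_le_rpow (norm_nonneg _) (q.le_opNorm _) (by norm_num)
        _ = (‖q‖ * ‖ξ‖) ^ (2 : ℝ≥0∞).toReal := by
            rw [tsum_mul_left, ← hξ, Real.mul_rpow (norm_nonneg _) (norm_nonneg _)])

@[simp] lemma diagOp_apply (q : H →L[ℂ] H) (ξ : l2 H) (k : ℕ) :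
    (diagOp q ξ) k = q (ξ k) := rfl

/-- An operator is *strongly positive* (written `ρ ≫ 0` in the paper) if `δ • I ≤ ρ`
(Loewner order) for some `δ > 0`.  A strongly positive operator is boundedly invertible. -/
def StronglyPositive {E : Type*} [NormedAddCommGroup E] [InnerProductSpace ℂ E]
    [CompleteSpace E] (ρ : E →L[ℂ] E) : Prop :=
  ∃ δ : ℝ, 0 < δ ∧ δ • (1 : E →L[ℂ] E) ≤ ρ

variable [CompleteSpace H]

/-- The Riccati map `ℱ(s) = A₁₁ + A₁₂ (diag{s} − A₂₂)⁻¹ A₁₂*`.  Here `Ring.inverse` is the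
genuine inverse whenever `diag{s} − A₂₂` is boundedly invertible, which is guaranteed when
`diag{s} − A₂₂ ≫ 0`. -/
def riccatiMap (A11 : H →L[ℂ] H) (A12 : l2 H →L[ℂ] H) (A22 : l2 H →L[ℂ] l2 H)
    (s : H →L[ℂ] H) : H →L[ℂ] H :=
  A11 + A12 ∘L Ring.inverse (diagOp s - A22) ∘L ContinuousLinearMap.adjoint A12

/-- The successive approximations `s₀ = A₁₁`, `s_{n+1} = ℱ(sₙ)`. -/
def riccatiSeq (A11 : H →L[ℂ] H) (A12 : l2 H →L[ℂ] H) (A22 : l2 H →L[ℂ] l2 H) :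
    ℕ → (H →L[ℂ] H)
  | 0 => A11
  | n + 1 => riccatiMap A11 A12 A22 (riccatiSeq A11 A12 A22 n)

end

section AuxLemmas

variable {H : Type*} [NormedAddCommGroup H] [InnerProductSpace ℂ H]

lemma diagOp_mul' (a b : H →L[ℂ] H) : diagOp (a * b) = diagOp a * diagOp b := by
  ext ξ k; rfl

lemma diagOp_one' : diagOp (1 : H →L[ℂ] H) = 1 := by
  ext ξ k; rfl

lemma diagOp_sub' (a b : H →L[ℂ] H) : diagOp (a - b) = diagOp a - diagOp b := by
  ext ξ k
  simp [lp.coeFn_sub, ContinuousLinearMap.sub_apply]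

lemma diagOp_smul' (r : ℝ) (a : H →L[ℂ] H) : diagOp (r • a) = r • diagOp a := by
  ext ξ k
  simp [lp.coeFn_smul, ContinuousLinearMap.smul_apply]

variable [CompleteSpace H]

lemma diagOp_nonneg {a : H →L[ℂ] H} (ha : 0 ≤ a) : 0 ≤ diagOp a := by
  rw [ContinuousLinearMap.nonneg_iff_isPositive] at ha ⊢
  rw [ContinuousLinearMap.isPositive_iff_complex] at ha ⊢
  intro ξ
  have hsum : Summable fun k => (inner ℂ ((diagOp a ξ) k) (ξ k) : ℂ) :=
    lp.summable_inner (diagOp a ξ) ξ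
  have hinner : (inner ℂ (diagOp a ξ) ξ : ℂ) = ∑' k, (inner ℂ (a (ξ k)) (ξ k) : ℂ) := rfl
  have hterm : ∀ k, (inner ℂ (a (ξ k)) (ξ k) : ℂ)
      = ((RCLike.re (inner ℂ (a (ξ k)) (ξ k) : ℂ) : ℝ) : ℂ) := fun k => ((ha (ξ k)).1).symm
  have hsum' : Summable fun k => (inner ℂ (a (ξ k)) (ξ k) : ℂ) := by
    simpa using hsum
  have hresum : Summable fun k => RCLike.re (inner ℂ (a (ξ k)) (ξ k) : ℂ) :=
    hsum'.mapL RCLike.reCLM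
  have hre : (inner ℂ (diagOp a ξ) ξ : ℂ)
      = ((∑' k, RCLike.re (inner ℂ (a (ξ k)) (ξ k) : ℂ) : ℝ) : ℂ) := by
    rw [hinner, tsum_congr hterm]
    exact (Complex.ofRealCLM.map_tsum hresum).symm
  constructor
  · rw [hre]; norm_cast
  · rw [hre]
    simp only [Complex.ofRealCLM_apply]
    rw [show RCLike.re ((((∑' k, RCLike.re (inner ℂ (a (ξ k)) (ξ k) : ℂ)) : ℝ)) : ℂ)
        = ∑' k, RCLike.re (inner ℂ (a (ξ k)) (ξ k) : ℂ) by simp]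
    exact tsum_nonneg fun k => (ha (ξ k)).2

lemma stronglyPositive_iff_isUnit_nonneg {E : Type*} [NormedAddCommGroup E]
    [InnerProductSpace ℂ E] [CompleteSpace E] (ρ : E →L[ℂ] E) :
    StronglyPositive ρ ↔ IsUnit ρ ∧ 0 ≤ ρ := by
  constructor
  · rintro ⟨δ, hδ, hle⟩
    have hc : (Real.sqrt δ • (1 : E →L[ℂ] E)) * (Real.sqrt δ • (1 : E →L[ℂ] E))
        = δ • (1 : E →L[ℂ] E) := by
      rw [smul_mul_smul_comm, one_mul, Real.mul_self_sqrt hδ.le]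
    have hstar : star (Real.sqrt δ • (1 : E →L[ℂ] E)) = Real.sqrt δ • (1 : E →L[ℂ] E) := by
      rw [star_smul, star_one, star_trivial]
    have h1 : (0 : E →L[ℂ] E) ≤ δ • 1 := by
      have := star_mul_self_nonneg (Real.sqrt δ • (1 : E →L[ℂ] E))
      rwa [hstar, hc] at this
    have hu1 : IsUnit (δ • (1 : E →L[ℂ] E)) := by
      refine ⟨⟨δ • 1, δ⁻¹ • 1, ?_, ?_⟩, rfl⟩
      · rw [smul_mul_smul_comm, one_mul, mul_inv_cancel₀ hδ.ne', one_smul]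
      · rw [smul_mul_smul_comm, one_mul, inv_mul_cancel₀ hδ.ne', one_smul]
    exact ⟨CStarAlgebra.isUnit_of_le _ hle (IsStrictlyPositive.iff_of_unital.mpr ⟨h1, hu1⟩), h1.trans hle⟩
  · rintro ⟨hu, hpos⟩
    rcases subsingleton_or_nontrivial (E →L[ℂ] E) with hss | hnt
    · exact ⟨1, one_pos, le_of_eq (Subsingleton.elim _ _)⟩
    have hsa : IsSelfAdjoint ρ :=
      ((ContinuousLinearMap.nonneg_iff_isPositive ρ).1 hpos).isSelfAdjoint
    have h0 : (0 : ℝ) ∉ spectrum ℝ ρ := spectrum.zero_notMem_iff ℝ |>.2 hu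
    obtain ⟨r, hr, hle⟩ := (CFC.exists_pos_algebraMap_le_iff (a := ρ) hsa).2
      (fun x hx => lt_of_le_of_ne (spectrum_nonneg_of_nonneg hpos hx)
        (fun h => h0 (h ▸ hx)))
    exact ⟨r, hr, by rwa [Algebra.algebraMap_eq_smul_one] at hle⟩

lemma StronglyPositive.isUnit {E : Type*} [NormedAddCommGroup E]
    [InnerProductSpace ℂ E] [CompleteSpace E] {ρ : E →L[ℂ] E}
    (h : StronglyPositive ρ) : IsUnit ρ :=
  ((stronglyPositive_iff_isUnit_nonneg ρ).1 h).1

lemma StronglyPositive.nonneg {E : Type*} [NormedAddCommGroup E]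
    [InnerProductSpace ℂ E] [CompleteSpace E] {ρ : E →L[ℂ] E}
    (h : StronglyPositive ρ) : 0 ≤ ρ :=
  ((stronglyPositive_iff_isUnit_nonneg ρ).1 h).2

lemma StronglyPositive.isSelfAdjoint' {E : Type*} [NormedAddCommGroup E]
    [InnerProductSpace ℂ E] [CompleteSpace E] {ρ : E →L[ℂ] E}
    (h : StronglyPositive ρ) : IsSelfAdjoint ρ :=
  ((ContinuousLinearMap.nonneg_iff_isPositive ρ).1 h.nonneg).isSelfAdjoint

lemma stronglyPositive_conj {E : Type*} [NormedAddCommGroup E]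
    [InnerProductSpace ℂ E] [CompleteSpace E] {X C : E →L[ℂ] E}
    (hX : StronglyPositive X) (hC : IsUnit C) :
    StronglyPositive (star C * X * C) := by
  rw [stronglyPositive_iff_isUnit_nonneg] at hX ⊢
  exact ⟨(hC.star.mul hX.1).mul hC, star_left_conjugate_nonneg hX.2 C⟩

lemma diagOp_stronglyPositive {a : H →L[ℂ] H} (ha : StronglyPositive a) :
    StronglyPositive (diagOp a) := by
  obtain ⟨δ, hδ, hle⟩ := ha
  refine ⟨δ, hδ, ?_⟩
  have : (0 : H →L[ℂ] H) ≤ a - δ • 1 := sub_nonneg.2 hle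
  have h2 := diagOp_nonneg this
  rw [diagOp_sub', diagOp_smul', diagOp_one'] at h2
  exact sub_nonneg.1 h2

lemma ring_inverse_eq_of {M₀ : Type*} [MonoidWithZero M₀] {a b : M₀}
    (h1 : a * b = 1) (h2 : b * a = 1) : Ring.inverse a = b :=
  Ring.inverse_unit ⟨a, b, h1, h2⟩

end AuxLemmas

/-- **The reduction (2.31)–(2.34) in Theorem 2.5.**  Let `A₂₂ ≥ 0` (so `A₁₁ ≫ 0`), let
`q₀ = A₁₁^{1/2}` be the strongly positive square root of `A₁₁`, and set
`U = q₀⁻¹ A₁₂ diag{q₀}⁻¹`, `D = diag{q₀}⁻¹ A₂₂ diag{q₀}⁻¹`,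
`G(t) = I + U(diag{t} − D)⁻¹U*`.  Then a selfadjoint `s` with `diag{s} − A₂₂ ≫ 0` is a fixed
point of `ℱ` iff `t = q₀⁻¹ s q₀⁻¹` satisfies `diag{t} − D ≫ 0` and `t = G(t)`. -/
theorem riccati_fixed_point_iff_normalized_fixed_point
    {H : Type*} [NormedAddCommGroup H] [InnerProductSpace ℂ H] [CompleteSpace H]
    [TopologicalSpace.SeparableSpace H]
    (A11 : H →L[ℂ] H) (A12 : l2 H →L[ℂ] H) (A22 : l2 H →L[ℂ] l2 H)
    (hA11sa : IsSelfAdjoint A11) (hA22sa : IsSelfAdjoint A22)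
    (hgap : StronglyPositive (diagOp A11 - A22)) (hA22 : 0 ≤ A22)
    (q0 : H →L[ℂ] H) (hq0 : StronglyPositive q0) (hq0sq : q0 * q0 = A11)
    (s : H →L[ℂ] H) (hs : IsSelfAdjoint s) (hspos : StronglyPositive (diagOp s - A22)) :
    letI U : l2 H →L[ℂ] H := Ring.inverse q0 ∘L A12 ∘L Ring.inverse (diagOp q0)
    letI D : l2 H →L[ℂ] l2 H :=
      Ring.inverse (diagOp q0) ∘L A22 ∘L Ring.inverse (diagOp q0)
    letI t : H →L[ℂ] H := Ring.inverse q0 ∘L s ∘L Ring.inverse q0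
    (riccatiMap A11 A12 A22 s = s ↔
      StronglyPositive (diagOp t - D) ∧
        1 + U ∘L Ring.inverse (diagOp t - D) ∘L ContinuousLinearMap.adjoint U = t) := by
  have hq0u : IsUnit q0 := hq0.isUnit
  have hq0sa : star q0 = q0 := hq0.isSelfAdjoint'
  have hPsp : StronglyPositive (diagOp q0) := diagOp_stronglyPositive hq0
  have hPu : IsUnit (diagOp q0) := hPsp.isUnit
  have hPsa : star (diagOp q0) = diagOp q0 := hPsp.isSelfAdjoint'
  have hXu : IsUnit (diagOp s - A22) := hspos.isUnit
  set r := Ring.inverse q0 with hrdef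
  set P := diagOp q0 with hPdef
  set iP := Ring.inverse P with hiPdef
  set X := diagOp s - A22 with hXdef
  set iX := Ring.inverse X with hiXdef
  set t := r.comp (s.comp r) with htdef
  set D := iP.comp (A22.comp iP) with hDdef
  set U := r.comp (A12.comp iP) with hUdef
  have hq0r : q0 * r = 1 := Ring.mul_inverse_cancel q0 hq0u
  have hrq0 : r * q0 = 1 := Ring.inverse_mul_cancel q0 hq0u
  have hPiP : P * iP = 1 := Ring.mul_inverse_cancel P hPu
  have hiPP : iP * P = 1 := Ring.inverse_mul_cancel P hPu
  have hXiX : X * iX = 1 := Ring.mul_inverse_cancel X hXu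
  have hiXX : iX * X = 1 := Ring.inverse_mul_cancel X hXu
  have hiPu : IsUnit iP := ⟨⟨iP, P, hiPP, hPiP⟩, rfl⟩
  have hstarr : star r = r := by
    rw [hrdef, ← Ring.inverse_star, hq0sa]
  have hstariP : star iP = iP := by
    rw [hiPdef, ← Ring.inverse_star, hPsa]
  have hadjr : ContinuousLinearMap.adjoint r = r := by
    rw [← ContinuousLinearMap.star_eq_adjoint, hstarr]
  have hadjiP : ContinuousLinearMap.adjoint iP = iP := by
    rw [← ContinuousLinearMap.star_eq_adjoint, hstariP]
  -- pointwise cancellation lemmas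
  have e1 : ∀ x, q0 (r x) = x := fun x => by
    simpa [ContinuousLinearMap.mul_apply] using ContinuousLinearMap.ext_iff.1 hq0r x
  have e2 : ∀ x, r (q0 x) = x := fun x => by
    simpa [ContinuousLinearMap.mul_apply] using ContinuousLinearMap.ext_iff.1 hrq0 x
  have e3 : ∀ ξ, P (iP ξ) = ξ := fun ξ => by
    simpa [ContinuousLinearMap.mul_apply] using ContinuousLinearMap.ext_iff.1 hPiP ξ
  have e4 : ∀ ξ, iP (P ξ) = ξ := fun ξ => by
    simpa [ContinuousLinearMap.mul_apply] using ContinuousLinearMap.ext_iff.1 hiPP ξ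
  have e5 : ∀ ξ, X (iX ξ) = ξ := fun ξ => by
    simpa [ContinuousLinearMap.mul_apply] using ContinuousLinearMap.ext_iff.1 hXiX ξ
  have e6 : ∀ ξ, iX (X ξ) = ξ := fun ξ => by
    simpa [ContinuousLinearMap.mul_apply] using ContinuousLinearMap.ext_iff.1 hiXX ξ
  have hA11x : ∀ x, A11 x = q0 (q0 x) := fun x => by
    rw [← hq0sq]; rfl
  have hiPdiag : iP = diagOp r := by
    refine ring_inverse_eq_of ?_ ?_
    · rw [hPdef, ← diagOp_mul', hq0r, diagOp_one']
    · rw [hPdef, ← diagOp_mul', hrq0, diagOp_one']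
  have hUx : ∀ ξ, U ξ = r (A12 (iP ξ)) := fun ξ => rfl
  have htx : ∀ x, t x = r (s (r x)) := fun x => rfl
  -- diag t - D = iP * (X * iP)
  have hdt : diagOp t = iP * (diagOp s * iP) := by
    rw [htdef]
    show diagOp (r * (s * r)) = _
    rw [diagOp_mul', diagOp_mul', ← hiPdiag]
  have hDt : diagOp t - D = iP * (X * iP) := by
    have hDD : D = iP * (A22 * iP) := rfl
    rw [hdt, hDD, hXdef]
    noncomm_ring
  have hsp2 : StronglyPositive (diagOp t - D) := by
    rw [hDt]
    have h := stronglyPositive_conj (X := X) (C := iP) hspos hiPu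
    rwa [hstariP, mul_assoc] at h
  have hinv : Ring.inverse (diagOp t - D) = P * (iX * P) := by
    rw [hDt]
    refine ring_inverse_eq_of ?_ ?_ <;>
      · ext ξ
        simp [ContinuousLinearMap.mul_apply, e3, e4, e5, e6]
  have hadjU : ContinuousLinearMap.adjoint U
      = iP ∘L (ContinuousLinearMap.adjoint A12 ∘L r) := by
    have hU' : U = r ∘L (A12 ∘L iP) := rfl
    rw [hU', ContinuousLinearMap.adjoint_comp, ContinuousLinearMap.adjoint_comp,
      hadjiP, hadjr]
    rfl
  have hmidx : ∀ x, U (Ring.inverse (diagOp t - D) (ContinuousLinearMap.adjoint U x))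
      = r (A12 (iX (ContinuousLinearMap.adjoint A12 (r x)))) := by
    intro x
    rw [hinv, hadjU]
    simp [ContinuousLinearMap.comp_apply, ContinuousLinearMap.mul_apply, hUx, e3, e4]
  rw [riccatiMap, ← hXdef, ← hiXdef]
  constructor
  · intro h
    refine ⟨hsp2, ?_⟩
    ext x
    have hx := ContinuousLinearMap.ext_iff.1 h (r x)
    simp only [ContinuousLinearMap.add_apply, ContinuousLinearMap.comp_apply,
      ContinuousLinearMap.one_apply] at hx ⊢
    rw [hmidx, htx, ← hx, map_add, hA11x]
    simp only [e1, e2]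
  · rintro ⟨-, h2⟩
    ext x
    have hx := ContinuousLinearMap.ext_iff.1 h2 (q0 x)
    simp only [ContinuousLinearMap.add_apply, ContinuousLinearMap.comp_apply,
      ContinuousLinearMap.one_apply] at hx ⊢
    rw [hmidx, htx, e2] at hx
    have := congrArg q0 hx
    rw [map_add] at this
    simp only [e1] at this
    rw [← hA11x] at this
    exact this
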